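/- Let Γ ≠ {±1} be a discrete subgroup of SL(2,ℝ) in which the only elements fixing ∞ are ±1, such that the radii 1/|c| of the isometric spheres I(g), g ∈ Γ \ {±1}, are bounded above and the family {int I(g) : g ∈ Γ \ {±1}} is locally finite in ℍ. Then the common exterior K is a nonempty open connected set satisfying: (i) g·K ∩ K = ∅ for every g ∈ Γ \ {±1}; and (ii) the Γ-translates of the closure of K in ℍ cover ℍ, i.e., ⋃_{g ∈ Γ} g·(closure of K in ℍ) = ℍ. In particular, K is a fundamental domain for Γ in ℍ. -/

import Mathlib

open Complex Matrix Filter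

noncomputable section

abbrev SL2R := Matrix.SpecialLinearGroup (Fin 2) ℝ

/-- The upper half-plane, as a subset of `ℂ`. -/
def UH : Set ℂ := {z : ℂ | 0 < z.im}

/-- Möbius action of `SL(2,ℝ)` on `ℂ`. -/
def moeb (g : SL2R) (z : ℂ) : ℂ :=
  ((g 0 0 : ℂ) * z + (g 0 1 : ℂ)) / ((g 1 0 : ℂ) * z + (g 1 1 : ℂ))

/-- The isometric sphere of `g` (requires `g 1 0 ≠ 0` to be meaningful). -/
def isoSphere (g : SL2R) : Set ℂ :=
  {z ∈ UH | ‖(g 1 0 : ℂ) * z + (g 1 1 : ℂ)‖ = 1}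

/-- The interior of the isometric sphere of `g`. -/
def isoInt (g : SL2R) : Set ℂ :=
  {z ∈ UH | ‖(g 1 0 : ℂ) * z + (g 1 1 : ℂ)‖ < 1}

/-- The exterior of the isometric sphere of `g`. -/
def isoExt (g : SL2R) : Set ℂ :=
  {z ∈ UH | 1 < ‖(g 1 0 : ℂ) * z + (g 1 1 : ℂ)‖}

/-- `g = 1` or `g = -1` (stated at the matrix level). -/
def IsPMOne (g : SL2R) : Prop :=
  (g : Matrix (Fin 2) (Fin 2) ℝ) = 1 ∨ (g : Matrix (Fin 2) (Fin 2) ℝ) = -1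

/-- Discreteness of a subgroup of `SL(2,ℝ)`: every element is isolated
(entrywise, which is equivalent to discreteness in the matrix topology). -/
def IsDiscreteSubgroup (Γ : Subgroup SL2R) : Prop :=
  ∀ g ∈ Γ, ∃ ε > (0 : ℝ), ∀ h ∈ Γ,
    (∀ i j, |(h : Matrix (Fin 2) (Fin 2) ℝ) i j - (g : Matrix (Fin 2) (Fin 2) ℝ) i j| < ε) → h = g

/-- The parabolic translation `t_λ = [[1,λ],[0,1]]` as an element of `SL(2,ℝ)`. -/
def tMat (l : ℝ) : SL2R := ⟨!![1, l; 0, 1], by norm_num [Matrix.det_fin_two_of]⟩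

/-- The common exterior `K` of all isometric spheres of `Γ`. -/
def commonExt (Γ : Subgroup SL2R) : Set ℂ :=
  ⋂ g ∈ {g : SL2R | g ∈ Γ ∧ ¬ IsPMOne g}, isoExt g

/-- An isometric sphere is relevant if it meets the frontier (in `ℍ`) of the
common exterior in more than one point. -/
def IsRelevant (Γ : Subgroup SL2R) (g : SL2R) : Prop :=
  (isoSphere g ∩ (frontier (commonExt Γ) ∩ UH)).Nontrivial

/-- The summit `-d/c + i/|c|` of the isometric sphere of `g`. -/
def summit (g : SL2R) : ℂ :=
  ((-(g 1 1) / g 1 0 : ℝ) : ℂ) + ((1 / |g 1 0| : ℝ) : ℂ) * Complex.I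

section helpers


lemma detR (g : SL2R) : g 0 0 * g 1 1 - g 0 1 * g 1 0 = 1 := by
  have := g.property; rwa [Matrix.det_fin_two] at this

lemma detC (g : SL2R) : (g 0 0 : ℂ) * g 1 1 - (g 0 1 : ℂ) * g 1 0 = 1 := by
  exact_mod_cast congrArg (Complex.ofReal) (detR g)

lemma denom_ne (g : SL2R) {z : ℂ} (hz : 0 < z.im) :
    (g 1 0 : ℂ) * z + (g 1 1 : ℂ) ≠ 0 := by
  intro h
  have him := congrArg Complex.im h
  have hre := congrArg Complex.re h
  simp [Complex.add_im, Complex.add_re, Complex.mul_im, Complex.mul_re] at him hre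
  have hc : g 1 0 = 0 := him.resolve_right hz.ne'
  have hd : g 1 1 = 0 := by rw [hc] at hre; simpa using hre
  have := detR g
  rw [hc, hd] at this; simp at this

lemma moeb_im (g : SL2R) (z : ℂ) :
    (moeb g z).im = z.im / Complex.normSq ((g 1 0 : ℂ) * z + (g 1 1 : ℂ)) := by
  rw [moeb, Complex.div_im]
  have hd := detR g
  rw [Complex.normSq_apply]
  simp only [Complex.add_re, Complex.add_im, Complex.mul_re, Complex.mul_im,
    Complex.ofReal_re, Complex.ofReal_im, zero_mul, mul_zero, sub_zero, add_zero, zero_add]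
  rw [div_sub_div_same]
  congr 1
  linear_combination z.im * hd

lemma moeb_im_pos (g : SL2R) {z : ℂ} (hz : 0 < z.im) : 0 < (moeb g z).im := by
  rw [moeb_im]
  exact div_pos hz (Complex.normSq_pos.2 (denom_ne g hz))

lemma normSq_real (g : SL2R) (z : ℂ) :
    Complex.normSq ((g 1 0 : ℂ) * z + (g 1 1 : ℂ)) =
      (g 1 0 * z.re + g 1 1)^2 + (g 1 0 * z.im)^2 := by
  rw [Complex.normSq_apply]
  simp only [Complex.add_re, Complex.add_im, Complex.mul_re, Complex.mul_im,
    Complex.ofReal_re, Complex.ofReal_im, zero_mul, mul_zero, sub_zero, add_zero, zero_add]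
  ring

lemma one_lt_abs_iff (x : ℂ) : 1 < ‖x‖ ↔ 1 < Complex.normSq x := by
  rw [← Complex.sq_norm]
  exact (one_lt_pow_iff_of_nonneg (norm_nonneg x) two_ne_zero).symm

lemma abs_lt_one_iff (x : ℂ) : ‖x‖ < 1 ↔ Complex.normSq x < 1 := by
  rw [← Complex.sq_norm]
  exact (pow_lt_one_iff_of_nonneg (norm_nonneg x) two_ne_zero).symm

lemma one_le_abs_iff (x : ℂ) : 1 ≤ ‖x‖ ↔ 1 ≤ Complex.normSq x := by
  rw [← Complex.sq_norm]
  exact (one_le_pow_iff_of_nonneg (norm_nonneg x) two_ne_zero).symm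

lemma moeb_one (z : ℂ) : moeb 1 z = z := by
  simp [moeb, Matrix.SpecialLinearGroup.coe_one, Matrix.one_apply]

lemma moeb_pm {h : SL2R} (hp : IsPMOne h) (z : ℂ) : moeb h z = z := by
  rcases hp with h1 | h1 <;>
  · have e00 := congrFun (congrFun h1 0) 0
    have e01 := congrFun (congrFun h1 0) 1
    have e10 := congrFun (congrFun h1 1) 0
    have e11 := congrFun (congrFun h1 1) 1
    simp [Matrix.one_apply] at e00 e01 e10 e11
    simp [moeb, e00, e01, e10, e11, neg_div_neg_eq]

lemma isPMOne_c_eq_zero {h : SL2R} (hp : IsPMOne h) : h 1 0 = 0 := by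
  rcases hp with h1 | h1 <;>
  · have e10 := congrFun (congrFun h1 1) 0
    simpa [Matrix.one_apply] using e10

lemma mul_apply' (g h : SL2R) (i j : Fin 2) :
    (g * h) i j = g i 0 * h 0 j + g i 1 * h 1 j := by
  show ((g * h : SL2R) : Matrix (Fin 2) (Fin 2) ℝ) i j = _
  rw [Matrix.SpecialLinearGroup.coe_mul, Matrix.mul_apply, Fin.sum_univ_two]

lemma moeb_mul (g h : SL2R) {z : ℂ} (hz : 0 < z.im) :
    moeb (g * h) z = moeb g (moeb h z) := by
  have hvh := denom_ne h hz
  have hw : 0 < (moeb h z).im := moeb_im_pos h hz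
  have hvg := denom_ne g hw
  have key : ∀ i : Fin 2, (g i 0 : ℂ) * moeb h z + (g i 1 : ℂ) =
      (((g * h) i 0 : ℂ) * z + ((g * h) i 1 : ℂ)) / ((h 1 0 : ℂ) * z + (h 1 1 : ℂ)) := by
    intro i
    rw [moeb, mul_apply' g h i 0, mul_apply' g h i 1]
    push_cast
    rw [eq_div_iff hvh]
    linear_combination (g i 0 : ℂ) * div_mul_cancel₀ ((h 0 0 : ℂ) * z + (h 0 1 : ℂ)) hvh
  conv_rhs => rw [moeb, key 0, key 1]
  rw [div_div_div_cancel_right₀ hvh, moeb]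

lemma inv_10 (g : SL2R) : g⁻¹ 1 0 = -(g 1 0) := by
  rw [Matrix.SpecialLinearGroup.SL2_inv_expl g]; rfl
lemma inv_11 (g : SL2R) : g⁻¹ 1 1 = g 0 0 := by
  rw [Matrix.SpecialLinearGroup.SL2_inv_expl g]; rfl

lemma inv_denom (g : SL2R) {z : ℂ} (hz : 0 < z.im) :
    (g⁻¹ 1 0 : ℂ) * moeb g z + (g⁻¹ 1 1 : ℂ) =
      1 / ((g 1 0 : ℂ) * z + (g 1 1 : ℂ)) := by
  rw [inv_10, inv_11, moeb]
  have hv := denom_ne g hz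
  have hd := detC g
  push_cast
  field_simp
  linear_combination hd

lemma isoExt_open (g : SL2R) : IsOpen (isoExt g) := by
  have : isoExt g = {z : ℂ | 0 < z.im} ∩
      {z : ℂ | 1 < ‖(g 1 0 : ℂ) * z + (g 1 1 : ℂ)‖} := by
    ext z; simp [isoExt, UH, Set.mem_setOf_eq]
  rw [this]
  exact (isOpen_lt continuous_const Complex.continuous_im).inter
    (isOpen_lt continuous_const (continuous_norm.comp
      ((continuous_const.mul continuous_id).add continuous_const)))

lemma mem_isoExt {g : SL2R} {z : ℂ} :
    z ∈ isoExt g ↔ 0 < z.im ∧ 1 < ‖(g 1 0 : ℂ) * z + (g 1 1 : ℂ)‖ :=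
  Iff.rfl

lemma mem_isoInt {g : SL2R} {z : ℂ} :
    z ∈ isoInt g ↔ 0 < z.im ∧ ‖(g 1 0 : ℂ) * z + (g 1 1 : ℂ)‖ < 1 :=
  Iff.rfl

lemma upK {g : SL2R} {z : ℂ} (hz : z ∈ isoExt g) {t : ℝ} (ht : 0 ≤ t) :
    z + t * I ∈ isoExt g := by
  obtain ⟨him, habs⟩ := hz
  have him : 0 < z.im := him
  have hre : (z + (t : ℂ) * I).re = z.re := by simp
  have him' : (z + (t : ℂ) * I).im = z.im + t := by simp
  rw [mem_isoExt, one_lt_abs_iff, normSq_real, hre, him']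
  rw [one_lt_abs_iff, normSq_real] at habs
  constructor
  · linarith
  · nlinarith [sq_nonneg (g 1 0 * t), mul_nonneg (mul_nonneg ht him.le) (sq_nonneg (g 1 0))]

end helpers

/-- the common exterior `K` is a nonempty open connected set whose
`Γ`-translates are disjoint from it and whose closure (in `ℍ`) tessellates `ℍ`;
in particular, `K` is a fundamental domain for `Γ` in `ℍ`. -/
theorem common_exterior_fundamental_domain
    (Γ : Subgroup SL2R) (hdisc : IsDiscreteSubgroup Γ)
    (hne : ∃ g ∈ Γ, ¬ IsPMOne g)
    (hstab : ∀ g ∈ Γ, g 1 0 = 0 → IsPMOne g)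
    (hrad : ∃ R : ℝ, ∀ g ∈ Γ, ¬ IsPMOne g → 1 / |g 1 0| ≤ R)
    (hlf : ∀ z ∈ UH, ∃ U ∈ nhds z,
      {g : SL2R | g ∈ Γ ∧ ¬ IsPMOne g ∧ (isoInt g ∩ U).Nonempty}.Finite)
    (K : Set ℂ) (hK : K = ⋂ g ∈ {g : SL2R | g ∈ Γ ∧ ¬ IsPMOne g}, isoExt g) :
    K.Nonempty ∧ IsOpen K ∧ IsConnected K ∧
      (∀ g ∈ Γ, ¬ IsPMOne g → (moeb g '' K) ∩ K = ∅) ∧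
      (⋃ g ∈ Γ, moeb g '' (closure K ∩ UH)) = UH := by
  obtain ⟨g₀, hg₀Γ, hg₀pm⟩ := hne
  obtain ⟨R, hR⟩ := hrad
  have hmem : ∀ z : ℂ, z ∈ K ↔ ∀ g : SL2R, g ∈ Γ → ¬ IsPMOne g → z ∈ isoExt g := by
    intro z
    simp only [hK, Set.mem_iInter, Set.mem_setOf_eq, and_imp]
  have hcne : ∀ g ∈ Γ, ¬ IsPMOne g → g 1 0 ≠ 0 := fun g hg hpm hc => hpm (hstab g hg hc)
  have hKim : ∀ z ∈ K, 0 < z.im := fun z hz => ((hmem z).1 hz g₀ hg₀Γ hg₀pm).1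
  set T : ℝ := max R 0 + 1 with hT
  have hT0 : 0 < T := by positivity
  -- high points are in K
  have highK : ∀ z : ℂ, T ≤ z.im → z ∈ K := by
    intro z hz
    rw [hmem]
    intro g hg hpm
    have hc := hcne g hg hpm
    have hac : 0 < |g 1 0| := abs_pos.2 hc
    have h1 : 1 / |g 1 0| ≤ R := hR g hg hpm
    have hzim : 0 < z.im := lt_of_lt_of_le hT0 hz
    refine ⟨hzim, ?_⟩
    rw [one_lt_abs_iff, normSq_real]
    have h2 : 1 < |g 1 0| * z.im := by
      have h3 : 1 / |g 1 0| < z.im := by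
        have : R < T := by simp [hT]; linarith [le_max_left R 0]
        linarith
      calc (1:ℝ) = |g 1 0| * (1 / |g 1 0|) := by field_simp
      _ < |g 1 0| * z.im := by exact mul_lt_mul_of_pos_left h3 hac
    have h4 : 1 < (|g 1 0| * z.im)^2 := by nlinarith
    have h5 : (g 1 0 * z.im)^2 = (|g 1 0| * z.im)^2 := by
      rw [mul_pow, mul_pow, _root_.sq_abs]
    nlinarith [sq_nonneg (g 1 0 * z.re + g 1 1)]
  -- K nonempty
  have hKne : K.Nonempty := by
    refine ⟨(T : ℂ) * I, highK _ ?_⟩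
    simp
  -- K open
  have hKopen : IsOpen K := by
    rw [isOpen_iff_mem_nhds]
    intro z hzK
    obtain ⟨U, hU, hF⟩ := hlf z (hKim z hzK)
    obtain ⟨ε, hε, hball⟩ := Metric.mem_nhds_iff.1 hU
    rw [mem_nhds_iff]
    refine ⟨Metric.ball z ε ∩ {w : ℂ | 0 < w.im} ∩
      ⋂ g ∈ {g : SL2R | g ∈ Γ ∧ ¬ IsPMOne g ∧ (isoInt g ∩ U).Nonempty}, isoExt g,
      ?_, ?_, ?_⟩
    · intro w hw
      obtain ⟨⟨hwball, hwim⟩, hwF⟩ := hw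
      rw [hmem]
      intro g hg hpm
      by_cases hgF : g ∈ {g : SL2R | g ∈ Γ ∧ ¬ IsPMOne g ∧ (isoInt g ∩ U).Nonempty}
      · exact Set.mem_iInter₂.1 hwF g hgF
      · have hnone : ¬(isoInt g ∩ U).Nonempty := fun h => hgF ⟨hg, hpm, h⟩
        have hwim' : (0:ℝ) < w.im := hwim
        refine ⟨hwim', ?_⟩
        by_contra hle
        push_neg at hle
        rcases lt_or_eq_of_le hle with hlt | heq
        · exact hnone ⟨w, ⟨hwim', hlt⟩, hball hwball⟩
        · -- abs = 1 : perturb downwards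
          have hc := hcne g hg hpm
          set t : ℝ := min ((ε - dist w z)/2) (w.im/2) with ht
          have hdz : dist w z < ε := Metric.mem_ball.1 hwball
          have ht0 : 0 < t := by
            apply lt_min <;> [linarith; linarith]
          have htw : t ≤ w.im / 2 := min_le_right _ _
          have hte : t ≤ (ε - dist w z)/2 := min_le_left _ _
          set w' : ℂ := w - (t : ℂ) * I with hw'
          have hw're : w'.re = w.re := by simp [hw']
          have hw'im : w'.im = w.im - t := by simp [hw']
          have hw'U : w' ∈ U := by
            apply hball
            rw [Metric.mem_ball]
            calc dist w' z ≤ dist w' w + dist w z := dist_triangle _ _ _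
            _ < ε := by
                have : dist w' w = t := by
                  rw [Complex.dist_eq, hw']
                  simp [_root_.abs_of_nonneg ht0.le]
                rw [this]
                linarith
          have habs1 : (g 1 0 * w.re + g 1 1)^2 + (g 1 0 * w.im)^2 = 1 := by
            have := congrArg (fun x => x^2) heq
            simpa [Complex.sq_norm, normSq_real] using this
          have : w' ∈ isoInt g := by
            rw [mem_isoInt, abs_lt_one_iff, normSq_real, hw're, hw'im]
            have hc2 : 0 < (g 1 0)^2 := by positivity
            have h2wt : 0 < 2 * w.im - t := by linarith
            have key : 0 < (g 1 0)^2 * (t * (2 * w.im - t)) :=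
              mul_pos hc2 (mul_pos ht0 h2wt)
            constructor
            · linarith
            · nlinarith [key]
          exact hnone ⟨w', this, hw'U⟩
    · refine (((Metric.isOpen_ball).inter (isOpen_lt continuous_const Complex.continuous_im))).inter
        (hF.isOpen_biInter fun g _ => isoExt_open g)
    · have hz1 : z ∈ Metric.ball z ε ∩ {w : ℂ | 0 < w.im} :=
        ⟨Metric.mem_ball_self hε, hKim z hzK⟩
      have hz2 : z ∈ ⋂ g ∈ {g : SL2R | g ∈ Γ ∧ ¬ IsPMOne g ∧ (isoInt g ∩ U).Nonempty},
          isoExt g := by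
        refine Set.mem_iInter₂.2 fun g hg => ?_
        obtain ⟨h1, h2, -⟩ := hg
        exact (hmem z).1 hzK g h1 h2
      exact ⟨hz1, hz2⟩
  -- K connected
  have hKconn : IsConnected K := by
    refine ⟨hKne, isPreconnected_of_forall ((T : ℂ) * I) ?_⟩
    intro y hy
    set M : ℝ := max T y.im with hM
    have hMT : T ≤ M := le_max_left _ _
    have hMy : y.im ≤ M := le_max_right _ _
    set p : ℂ := (y.re : ℂ) + (M : ℂ) * I with hp
    have hpim : p.im = M := by simp [hp]
    have hpre : p.re = y.re := by simp [hp]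
    refine ⟨segment ℝ y p ∪ {w : ℂ | T ≤ w.im}, ?_, ?_, ?_, ?_⟩
    · rintro w (hw | hw)
      · -- segment points
        rw [segment_eq_image] at hw
        obtain ⟨s, hs, rfl⟩ := hw
        have key : (1 - s) • y + s • p = y + ((s * (M - y.im)) : ℝ) * I := by
          apply Complex.ext
          · simp [Complex.add_re, Complex.smul_re, hpre]; ring
          · simp [Complex.add_im, Complex.smul_im, hpim]; ring
        show (1 - s) • y + s • p ∈ K
        rw [key]
        rw [hmem]
        intro g hg hpm
        exact upK ((hmem y).1 hy g hg hpm) (by nlinarith [hs.1, hs.2, hMy])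
      · exact highK w hw
    · exact Or.inr (by simp)
    · exact Or.inl (left_mem_segment ℝ y p)
    · refine IsPreconnected.union p ?_ ?_ ?_ ?_
      · exact right_mem_segment ℝ y p
      · show T ≤ p.im; rw [hpim]; exact hMT
      · exact (convex_segment y p).isPreconnected
      · exact (convex_halfSpace_im_ge T).isPreconnected
  refine ⟨hKne, hKopen, hKconn, ?_, ?_⟩
  -- (i) translates disjoint
  · intro g hg hpm
    rw [Set.eq_empty_iff_forall_notMem]
    rintro w ⟨⟨z, hzK, rfl⟩, hwK⟩
    obtain ⟨hzim, hzabs⟩ := (hmem z).1 hzK g hg hpm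
    have hginv_pm : ¬ IsPMOne g⁻¹ := by
      intro hp
      have h0 := isPMOne_c_eq_zero hp
      rw [inv_10] at h0
      exact hcne g hg hpm (neg_eq_zero.1 h0)
    obtain ⟨-, hwabs⟩ := (hmem _).1 hwK g⁻¹ (inv_mem hg) hginv_pm
    rw [inv_denom g hzim, norm_div, norm_one] at hwabs
    have hvpos : 0 < ‖(g 1 0 : ℂ) * z + (g 1 1 : ℂ)‖ :=
      lt_trans one_pos hzabs
    rw [one_lt_div hvpos] at hwabs
    linarith
  -- (ii) tessellation
  · apply Set.Subset.antisymm
    · intro w hw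
      simp only [Set.mem_iUnion] at hw
      obtain ⟨g, hg, x, ⟨hxcl, hxUH⟩, rfl⟩ := hw
      exact moeb_im_pos g hxUH
    · intro z hz
      have hzim : 0 < z.im := hz
      obtain ⟨U, hU, hF⟩ := hlf z hz
      set C : Set SL2R :=
        insert 1 {g : SL2R | g ∈ Γ ∧ ¬ IsPMOne g ∧ (isoInt g ∩ U).Nonempty} with hC
      have hCfin : C.Finite := hF.insert _
      obtain ⟨gm, hgmC, hmax⟩ :=
        Set.exists_max_image C (fun g => (moeb g z).im) hCfin ⟨1, Set.mem_insert _ _⟩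
      have hgmΓ : gm ∈ Γ := by
        rcases hgmC with rfl | h
        · exact one_mem Γ
        · exact h.1
      have hone : z.im ≤ (moeb gm z).im := by
        have := hmax 1 (Set.mem_insert _ _)
        rwa [moeb_one] at this
      have hglobal : ∀ h ∈ Γ, (moeb h z).im ≤ (moeb gm z).im := by
        intro h hh
        by_cases hpm : IsPMOne h
        · rw [moeb_pm hpm]; exact hone
        · by_cases hint : ‖(h 1 0 : ℂ) * z + (h 1 1 : ℂ)‖ < 1
          · exact hmax h (Set.mem_insert_iff.2 (Or.inr ⟨hh, hpm, ⟨z, ⟨hzim, hint⟩,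
              mem_of_mem_nhds hU⟩⟩))
          · push_neg at hint
            have h1 : (moeb h z).im ≤ z.im := by
              rw [moeb_im]
              apply div_le_self hzim.le
              rw [← one_le_abs_iff]
              exact hint
            linarith
      set w : ℂ := moeb gm z with hw
      have hwim : 0 < w.im := moeb_im_pos gm hzim
      have hwext : ∀ g ∈ Γ, ¬ IsPMOne g →
          1 ≤ Complex.normSq ((g 1 0 : ℂ) * w + (g 1 1 : ℂ)) := by
        intro g hg hpm
        have h2 := hglobal (g * gm) (mul_mem hg hgmΓ)
        rw [moeb_mul g gm hzim, ← hw, moeb_im] at h2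
        have hns : 0 < Complex.normSq ((g 1 0 : ℂ) * w + (g 1 1 : ℂ)) :=
          Complex.normSq_pos.2 (denom_ne g hwim)
        rw [div_le_iff₀ hns] at h2
        nlinarith
      have hclosure : ∀ t : ℝ, 0 < t → w + (t : ℂ) * I ∈ K := by
        intro t ht
        rw [hmem]
        intro g hg hpm
        have hc := hcne g hg hpm
        have h1 := hwext g hg hpm
        rw [normSq_real] at h1
        have hre : (w + (t : ℂ) * I).re = w.re := by simp
        have him : (w + (t : ℂ) * I).im = w.im + t := by simp
        rw [mem_isoExt, one_lt_abs_iff, normSq_real, hre, him]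
        have hc2 : 0 < (g 1 0)^2 := by positivity
        refine ⟨by linarith, ?_⟩
        nlinarith [mul_pos hc2 (mul_pos ht (by linarith : (0:ℝ) < 2 * w.im + t))]
      have hwcl : w ∈ closure K := by
        have hcont : Continuous (fun t : ℝ => w + (t : ℂ) * I) :=
          continuous_const.add (Complex.continuous_ofReal.mul continuous_const)
        have h0 : Tendsto (fun t : ℝ => w + (t : ℂ) * I) (nhds 0) (nhds w) := by
          have := hcont.tendsto 0
          simpa using this
        have htend : Tendsto (fun t : ℝ => w + (t : ℂ) * I)
            (nhdsWithin 0 (Set.Ioi 0)) (nhds w) :=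
          h0.mono_left nhdsWithin_le_nhds
        exact mem_closure_of_tendsto htend
          (Filter.eventually_of_mem self_mem_nhdsWithin (fun t ht => hclosure t ht))
      have hback : moeb gm⁻¹ w = z := by
        have h3 := moeb_mul gm⁻¹ gm hzim
        rw [inv_mul_cancel, moeb_one] at h3
        exact h3.symm
      simp only [Set.mem_iUnion]
      exact ⟨gm⁻¹, inv_mem hgmΓ, w, ⟨hwcl, hwim⟩, hback⟩
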